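/- Let r_max ≥ 0 and θ : V × V → ℝ with θ(u,v) ≥ 0 for all pairs. If Σ_{u∈V} θ(u,v) ≤ r_max·d(v) for every node v ∈ V, then for every node t ∈ V, Σ_{(u,v)∈V×V} θ(u,v)·π_v(t) ≤ r_max·d(t). Consequently, if per-edge thresholds satisfy Σ_{u∈N(v)} θ(u,v) ≤ r_max·d(v) for all v, the EdgePush algorithm achieves normalized additive error at most r_max at every node. -/

import Mathlib

open Finset

/-- Weighted degree of a node. -/
noncomputable def deg {V : Type*} [Fintype V] (A : V → V → ℝ) (u : V) : ℝ := ∑ v, A u v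

/-- Transition matrix `P t v = A t v / d v` (column-stochastic). -/
noncomputable def transP {V : Type*} [Fintype V] (A : V → V → ℝ) : Matrix V V ℝ :=
  Matrix.of fun t v => A t v / deg A v

/-- Single-source personalized PageRank: `π_x = Σ_{ℓ≥0} α(1-α)^ℓ P^ℓ e_x`. -/
noncomputable def ppr {V : Type*} [Fintype V] [DecidableEq V]
    (A : V → V → ℝ) (α : ℝ) (x t : V) : ℝ :=
  ∑' ℓ : ℕ, α * (1 - α) ^ ℓ * ((transP A ^ ℓ).mulVec (Pi.single x 1)) t


section Aux
variable {V : Type*} [Fintype V] [DecidableEq V]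

lemma transP_nonneg (A : V → V → ℝ) (hnonneg : ∀ u v : V, 0 ≤ A u v)
    (hdeg : ∀ u : V, 0 < deg A u) (t v : V) : 0 ≤ transP A t v :=
  div_nonneg (hnonneg t v) (hdeg v).le

lemma transP_colsum (A : V → V → ℝ) (hsymm : ∀ u v : V, A u v = A v u)
    (hdeg : ∀ u : V, 0 < deg A u) (v : V) : ∑ t, transP A t v = 1 := by
  have : ∑ t, A t v = deg A v := by
    simp only [deg]; exact Finset.sum_congr rfl fun t _ => hsymm t v |>.symm ▸ rfl
  simp only [transP, Matrix.of_apply, div_eq_mul_inv, ← Finset.sum_mul]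
  rw [show (∑ t, A t v) = deg A v from by
    simpa [deg] using Finset.sum_congr rfl fun t _ => hsymm t v]
  exact mul_inv_cancel₀ (hdeg v).ne'

lemma pow_nonneg' (A : V → V → ℝ) (hnonneg : ∀ u v : V, 0 ≤ A u v)
    (hdeg : ∀ u : V, 0 < deg A u) (ℓ : ℕ) (t v : V) : 0 ≤ (transP A ^ ℓ) t v := by
  induction ℓ generalizing t v with
  | zero => simp [Matrix.one_apply]; positivity
  | succ n ih =>
      rw [pow_succ, Matrix.mul_apply]
      exact Finset.sum_nonneg fun k _ => mul_nonneg (ih t k) (transP_nonneg A hnonneg hdeg k v)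

lemma pow_colsum (A : V → V → ℝ) (hsymm : ∀ u v : V, A u v = A v u)
    (hdeg : ∀ u : V, 0 < deg A u) (ℓ : ℕ) (v : V) : ∑ t, (transP A ^ ℓ) t v = 1 := by
  induction ℓ with
  | zero => simp [Matrix.one_apply]
  | succ n ih =>
      simp only [pow_succ', Matrix.mul_apply]
      rw [Finset.sum_comm]
      have : ∀ k, ∑ t, transP A t k * (transP A ^ n) k v = (transP A ^ n) k v := by
        intro k; rw [← Finset.sum_mul, transP_colsum A hsymm hdeg k, one_mul]
      simp_rw [this]; exact ih

lemma powEntry_le_one (A : V → V → ℝ) (hsymm : ∀ u v : V, A u v = A v u)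
    (hnonneg : ∀ u v : V, 0 ≤ A u v) (hdeg : ∀ u : V, 0 < deg A u)
    (ℓ : ℕ) (t v : V) : (transP A ^ ℓ) t v ≤ 1 := by
  calc (transP A ^ ℓ) t v ≤ ∑ s, (transP A ^ ℓ) s v :=
        Finset.single_le_sum (fun s _ => pow_nonneg' A hnonneg hdeg ℓ s v) (Finset.mem_univ t)
    _ = 1 := pow_colsum A hsymm hdeg ℓ v

lemma detailed_balance (A : V → V → ℝ) (hsymm : ∀ u v : V, A u v = A v u)
    (hdeg : ∀ u : V, 0 < deg A u) (ℓ : ℕ) (t v : V) :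
    (transP A ^ ℓ) t v * deg A v = (transP A ^ ℓ) v t * deg A t := by
  induction ℓ generalizing t v with
  | zero =>
      by_cases h : t = v
      · subst h; rfl
      · simp [Matrix.one_apply, h, Ne.symm h]
  | succ n ih =>
      have hsw : transP A ^ n * transP A = transP A * transP A ^ n := by
        rw [← pow_succ, pow_succ']
      rw [pow_succ, Matrix.mul_apply, Finset.sum_mul, hsw, Matrix.mul_apply,
        Finset.sum_mul]
      refine Finset.sum_congr rfl fun k _ => ?_
      have h1 : transP A k v * deg A v = A k v := by
        simp [transP, div_mul_cancel₀, (hdeg v).ne']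
      have h2 : A k v = transP A v k * deg A k := by
        rw [hsymm k v]; simp [transP, div_mul_cancel₀, (hdeg k).ne']
      calc (transP A ^ n) t k * transP A k v * deg A v
          = (transP A ^ n) t k * (transP A k v * deg A v) := by ring
        _ = (transP A ^ n) t k * (transP A v k * deg A k) := by rw [h1, h2]
        _ = transP A v k * ((transP A ^ n) t k * deg A k) := by ring
        _ = transP A v k * ((transP A ^ n) k t * deg A t) := by rw [ih]
        _ = transP A v k * (transP A ^ n) k t * deg A t := by ring

lemma ppr_eq (A : V → V → ℝ) (α : ℝ) (x t : V) :
    ppr A α x t = ∑' ℓ : ℕ, α * (1 - α) ^ ℓ * (transP A ^ ℓ) t x := by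
  unfold ppr
  congr 1; funext ℓ
  congr 1
  simp [Matrix.mulVec, dotProduct, Pi.single_apply, mul_ite]

lemma ppr_summable (A : V → V → ℝ) (hsymm : ∀ u v : V, A u v = A v u)
    (hnonneg : ∀ u v : V, 0 ≤ A u v) (hdeg : ∀ u : V, 0 < deg A u)
    (α : ℝ) (hα : α ∈ Set.Ioo (0:ℝ) 1) (x t : V) :
    Summable (fun ℓ : ℕ => α * (1 - α) ^ ℓ * (transP A ^ ℓ) t x) := by
  obtain ⟨h0, h1⟩ := hα
  refine Summable.of_nonneg_of_le (fun ℓ => ?_) (fun ℓ => ?_)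
    (((summable_geometric_of_lt_one (r := 1 - α) (by linarith) (by linarith)).mul_left α))
  · exact mul_nonneg (mul_nonneg h0.le (pow_nonneg (by linarith) ℓ)) (pow_nonneg' A hnonneg hdeg ℓ t x)
  · have := powEntry_le_one A hsymm hnonneg hdeg ℓ t x
    have hp : 0 ≤ α * (1-α)^ℓ := mul_nonneg h0.le (pow_nonneg (by linarith) ℓ)
    calc α * (1-α)^ℓ * (transP A ^ ℓ) t x ≤ α * (1-α)^ℓ * 1 :=
          mul_le_mul_of_nonneg_left this hp
      _ = α * (1-α)^ℓ := mul_one _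

lemma ppr_nonneg (A : V → V → ℝ)
    (hnonneg : ∀ u v : V, 0 ≤ A u v) (hdeg : ∀ u : V, 0 < deg A u)
    (α : ℝ) (hα : α ∈ Set.Ioo (0:ℝ) 1) (x t : V) : 0 ≤ ppr A α x t := by
  rw [ppr_eq]
  exact tsum_nonneg fun ℓ => mul_nonneg (mul_nonneg hα.1.le (pow_nonneg (by linarith [hα.2]) ℓ))
    (pow_nonneg' A hnonneg hdeg ℓ t x)

lemma ppr_symm (A : V → V → ℝ) (hsymm : ∀ u v : V, A u v = A v u)
    (hnonneg : ∀ u v : V, 0 ≤ A u v) (hdeg : ∀ u : V, 0 < deg A u)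
    (α : ℝ) (hα : α ∈ Set.Ioo (0:ℝ) 1) (v t : V) :
    ppr A α v t * deg A v = ppr A α t v * deg A t := by
  rw [ppr_eq, ppr_eq, ← tsum_mul_right, ← tsum_mul_right]
  refine tsum_congr fun ℓ => ?_
  rw [mul_assoc, mul_assoc, detailed_balance A hsymm hdeg ℓ t v]; ring

lemma ppr_rowsum (A : V → V → ℝ) (hsymm : ∀ u v : V, A u v = A v u)
    (hnonneg : ∀ u v : V, 0 ≤ A u v) (hdeg : ∀ u : V, 0 < deg A u)
    (α : ℝ) (hα : α ∈ Set.Ioo (0:ℝ) 1) (t : V) :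
    ∑ v, ppr A α t v = 1 := by
  obtain ⟨h0, h1⟩ := hα
  have h : ∀ v : V, ppr A α t v = ∑' ℓ : ℕ, α * (1-α)^ℓ * (transP A ^ ℓ) v t :=
    fun v => ppr_eq A α t v
  simp_rw [h]
  rw [← Summable.tsum_finsetSum (fun v _ => ppr_summable A hsymm hnonneg hdeg α ⟨h0,h1⟩ t v)]
  have : ∀ ℓ : ℕ, ∑ v, α * (1-α)^ℓ * (transP A ^ ℓ) v t = α * (1-α)^ℓ := by
    intro ℓ
    rw [← Finset.mul_sum, pow_colsum A hsymm hdeg ℓ t, mul_one]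
  simp_rw [this]
  rw [tsum_mul_left, tsum_geometric_of_lt_one (by linarith) (by linarith)]
  rw [sub_sub_cancel, mul_inv_cancel₀ h0.ne']

end Aux

/-- **Local error constraint suffices (Lemma A.6 / Lemma 5.9)**: if the per-edge
thresholds are nonnegative and satisfy `Σ_u θ(u,v) ≤ r_max·d(v)` for every node `v`,
then `Σ_{(u,v)} θ(u,v)·π_v(t) ≤ r_max·d(t)` for every node `t`. Consequently, the
EdgePush algorithm (whose terminal state satisfies the invariant with
`0 ≤ R(u,v) ≤ θ(u,v)`) achieves normalized additive error at most `r_max` at every node. -/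
theorem edgepush_local_error_constraint
    {V : Type*} [Fintype V] [DecidableEq V] [Nonempty V]
    (A : V → V → ℝ)
    (hsymm : ∀ u v : V, A u v = A v u)
    (hnonneg : ∀ u v : V, 0 ≤ A u v)
    (hdeg : ∀ u : V, 0 < deg A u)
    (α : ℝ) (hα : α ∈ Set.Ioo (0 : ℝ) 1)
    (rmax : ℝ) (hrmax : 0 ≤ rmax)
    (θ : V → V → ℝ) (hθ : ∀ u v : V, 0 ≤ θ u v)
    (hcol : ∀ v : V, ∑ u, θ u v ≤ rmax * deg A v) :
    (∀ t : V, ∑ p : V × V, θ p.1 p.2 * ppr A α p.2 t ≤ rmax * deg A t) ∧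
    (∀ s : V, ∀ q : V → ℝ, ∀ R : V → V → ℝ,
      (∀ t : V,
        ppr A α s t = α * q t + ∑ p : V × V, R p.1 p.2 * ppr A α p.2 t) →
      (∀ u v : V, 0 ≤ R u v ∧ R u v ≤ θ u v) →
      ∀ t : V, |ppr A α s t / deg A t - α * q t / deg A t| ≤ rmax) := by
  obtain ⟨h0, h1⟩ := hα
  have hα' : α ∈ Set.Ioo (0:ℝ) 1 := ⟨h0, h1⟩
  have key : ∀ t : V, ∑ p : V × V, θ p.1 p.2 * ppr A α p.2 t ≤ rmax * deg A t := by
    intro t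
    have hprod : ∑ p : V × V, θ p.1 p.2 * ppr A α p.2 t
        = ∑ v, (∑ u, θ u v) * ppr A α v t := by
      rw [Fintype.sum_prod_type, Finset.sum_comm]
      simp_rw [Finset.sum_mul]
    rw [hprod]
    have step1 : ∑ v, (∑ u, θ u v) * ppr A α v t ≤ ∑ v, (rmax * deg A v) * ppr A α v t :=
      Finset.sum_le_sum fun v _ =>
        mul_le_mul_of_nonneg_right (hcol v) (ppr_nonneg A hnonneg hdeg α hα' v t)
    refine step1.trans ?_
    have step2 : ∑ v, (rmax * deg A v) * ppr A α v t = rmax * deg A t := by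
      have h : ∀ v, (rmax * deg A v) * ppr A α v t = rmax * (deg A t * ppr A α t v) := by
        intro v
        rw [mul_assoc, mul_comm (deg A v) (ppr A α v t),
          ppr_symm A hsymm hnonneg hdeg α hα' v t]
        ring
      simp_rw [h]
      rw [← Finset.mul_sum, ← Finset.mul_sum, ppr_rowsum A hsymm hnonneg hdeg α hα' t]
      ring
    exact le_of_eq step2
  refine ⟨key, ?_⟩
  intro s q R hinv hR t
  have hRsum_nonneg : 0 ≤ ∑ p : V × V, R p.1 p.2 * ppr A α p.2 t :=
    Finset.sum_nonneg fun p _ =>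
      mul_nonneg (hR p.1 p.2).1 (ppr_nonneg A hnonneg hdeg α hα' p.2 t)
  have hRle : ∑ p : V × V, R p.1 p.2 * ppr A α p.2 t ≤ rmax * deg A t := by
    refine le_trans (Finset.sum_le_sum fun p _ => ?_) (key t)
    exact mul_le_mul_of_nonneg_right (hR p.1 p.2).2 (ppr_nonneg A hnonneg hdeg α hα' p.2 t)
  have hdt := hdeg t
  have heq : ppr A α s t / deg A t - α * q t / deg A t
      = (∑ p : V × V, R p.1 p.2 * ppr A α p.2 t) / deg A t := by
    rw [div_sub_div_same, hinv t]; ring_nf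
  rw [heq, abs_of_nonneg (div_nonneg hRsum_nonneg hdt.le), div_le_iff₀ hdt]
  exact hRle
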